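/- arXiv:1310.7393 — 6 statements merged into one kernel-verified Lean document; each statement's English description precedes it below -/
import Mathlib

section
/- Let h₁ and h₂ be horizontal endomorphisms on the prolongation L^π E of a Lie algebroid. If h₁ and h₂ have the same associated semispray (h₁S = h₂S for a/any semispray S) and the same strong torsion T = i_S t + H, then h₁ = h₂, where t = [J, h]^{F−N} is the weak torsion and H = [h, C]^{F−N} is the tension. -/
/-!
We work with a Lie algebroid `π : E → M` in a (global) trivialization:
the base `M` is modelled on a real normed space `A`, the fibre of `E` is a real
normed space `B`, the total space is `E = A × B`, sections of `E` are maps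
`A → B`, the anchor is `ρ : A → (B →L[ℝ] A)` and the structure function of the
bracket is `Lb : A → (B →L[ℝ] B →L[ℝ] B)`.  The prolongation `L^π E → E` is the
trivial bundle with fibre `B × B`; its sections are pairs of maps `(A × B) → B`
(the components along the canonical frames `𝒳_α` and `𝒱_α`).
-/

noncomputable section

variable {A B : Type*} [NormedAddCommGroup A] [NormedSpace ℝ A]
  [NormedAddCommGroup B] [NormedSpace ℝ B]

/-- Sections of the prolongation `L^π E → E`. -/
abbrev Sec (A B : Type*) := ((A × B) → B) × ((A × B) → B)

/-- The axioms of a Lie algebroid (smoothness, antisymmetry and the two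
structure equations: anchor compatibility and the Jacobi identity). -/
def IsLieAlgebroidData (ρ : A → B →L[ℝ] A) (Lb : A → B →L[ℝ] B →L[ℝ] B) : Prop :=
  ContDiff ℝ (⊤ : ℕ∞) ρ ∧ ContDiff ℝ (⊤ : ℕ∞) Lb ∧
    (∀ x u v, Lb x u v = - Lb x v u) ∧
    (∀ x u v, fderiv ℝ ρ x (ρ x u) v - fderiv ℝ ρ x (ρ x v) u = ρ x (Lb x u v)) ∧
    (∀ x u v w,
      fderiv ℝ Lb x (ρ x u) v w + Lb x u (Lb x v w) +
        fderiv ℝ Lb x (ρ x v) w u + Lb x v (Lb x w u) +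
          fderiv ℝ Lb x (ρ x w) u v + Lb x w (Lb x u v) = 0)

/-- The Lie algebroid bracket `[X, Y]_E` of two sections of `E`. -/
def abr (ρ : A → B →L[ℝ] A) (Lb : A → B →L[ℝ] B →L[ℝ] B) (X Y : A → B) : A → B :=
  fun x => fderiv ℝ Y x (ρ x (X x)) - fderiv ℝ X x (ρ x (Y x)) + Lb x (X x) (Y x)

/-- The action `ρ(X)(f)` of a section through the anchor. -/
def ρf (ρ : A → B →L[ℝ] A) (X : A → B) (f : A → ℝ) : A → ℝ :=
  fun x => fderiv ℝ f x (ρ x (X x))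

/-- Vertical lift `f^∨ = f ∘ π` of a function on `M`. -/
def fvert (f : A → ℝ) : A × B → ℝ := fun p => f p.1

/-- Complete lift `f^c(u) = ρ(u)(f)` of a function on `M`. -/
def fcomp (ρ : A → B →L[ℝ] A) (f : A → ℝ) : A × B → ℝ :=
  fun p => fderiv ℝ f p.1 (ρ p.1 p.2)

/-- The tangent vector to `E` determined by a prolongation section through the
prolongation anchor `ρ_L(u, z) = z`. -/
def ρL (ρ : A → B →L[ℝ] A) (U : Sec A B) (p : A × B) : A × B :=
  (ρ p.1 (U.1 p), U.2 p)

/-- The bracket `[·,·]_L` of the prolongation Lie algebroid `L^π E`. -/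
def pbr (ρ : A → B →L[ℝ] A) (Lb : A → B →L[ℝ] B →L[ℝ] B) (U V : Sec A B) : Sec A B :=
  (fun p => fderiv ℝ V.1 p (ρL ρ U p) - fderiv ℝ U.1 p (ρL ρ V p) + Lb p.1 (U.1 p) (V.1 p),
   fun p => fderiv ℝ V.2 p (ρL ρ U p) - fderiv ℝ U.2 p (ρL ρ V p))

/-- The vertical endomorphism `J = i ∘ j` of `L^π E`. -/
def vJ (U : Sec A B) : Sec A B := (0, U.1)

/-- The Liouville (Euler) section `C = i ∘ δ`. -/
def Liou : Sec A B := (0, fun p => p.2)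

/-- Vertical lift `X^V` of a section of `E` to `L^π E`. -/
def vlift (X : A → B) : Sec A B := (0, fun p => X p.1)

/-- Complete lift `X^C` of a section of `E` to `L^π E`. -/
def clift (ρ : A → B →L[ℝ] A) (Lb : A → B →L[ℝ] B →L[ℝ] B) (X : A → B) : Sec A B :=
  (fun p => X p.1, fun p => fderiv ℝ X p.1 (ρ p.1 p.2) - Lb p.1 (X p.1) p.2)

/-- The horizontal endomorphism with coefficient `𝓑`
(`h = (𝒳_β + 𝓑^α_β 𝒱_α) ⊗ 𝒳^β`). -/
def hor (𝓑 : A × B → B →L[ℝ] B) (U : Sec A B) : Sec A B :=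
  (U.1, fun p => 𝓑 p (U.1 p))

/-- The vertical projector `v = Id − h` associated to a horizontal endomorphism. -/
def vpr (𝓑 : A × B → B →L[ℝ] B) (U : Sec A B) : Sec A B := U - hor 𝓑 U

/-- Horizontal lift `X^h = h(X^C)`. -/
def hlift (ρ : A → B →L[ℝ] A) (Lb : A → B →L[ℝ] B →L[ℝ] B)
    (𝓑 : A × B → B →L[ℝ] B) (X : A → B) : Sec A B :=
  hor 𝓑 (clift ρ Lb X)

/-- Multiplication of a prolongation section by a function on `E`. -/
def fsmul (g : A × B → ℝ) (U : Sec A B) : Sec A B :=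
  (fun p => g p • U.1 p, fun p => g p • U.2 p)

/-- Generalized Frölicher–Nijenhuis bracket `[K, Z]^{F-N}` of a `(1,1)`-tensor
with a section: `[K, Z]^{F-N}(U) = [K(U), Z]_L − K([U, Z]_L)`. -/
def fnKZ (ρ : A → B →L[ℝ] A) (Lb : A → B →L[ℝ] B →L[ℝ] B)
    (K : Sec A B → Sec A B) (Z U : Sec A B) : Sec A B :=
  pbr ρ Lb (K U) Z - K (pbr ρ Lb U Z)

/-- Generalized Frölicher–Nijenhuis bracket `[Z, K]^{F-N}` of a section with a
`(1,1)`-tensor. -/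
def fnZK (ρ : A → B →L[ℝ] A) (Lb : A → B →L[ℝ] B →L[ℝ] B)
    (Z : Sec A B) (K : Sec A B → Sec A B) (U : Sec A B) : Sec A B :=
  pbr ρ Lb Z (K U) - K (pbr ρ Lb Z U)

/-- Generalized Frölicher–Nijenhuis bracket of two `(1,1)`-tensors, evaluated on
two sections. -/
def fnKL (ρ : A → B →L[ℝ] A) (Lb : A → B →L[ℝ] B →L[ℝ] B)
    (K L' : Sec A B → Sec A B) (U V : Sec A B) : Sec A B :=
  pbr ρ Lb (K U) (L' V) + pbr ρ Lb (L' U) (K V)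
    + K (L' (pbr ρ Lb U V)) + L' (K (pbr ρ Lb U V))
    - K (pbr ρ Lb U (L' V)) - K (pbr ρ Lb (L' U) V)
    - L' (pbr ρ Lb U (K V)) - L' (pbr ρ Lb (K U) V)

/-- The slit total space `E ∖ {0}` (complement of the zero section). -/
def Slit : Set (A × B) := {p | p.2 ≠ 0}

/-- Smoothness of a prolongation section (on all of `E`). -/
def SecSmooth (U : Sec A B) : Prop :=
  ContDiff ℝ (⊤ : ℕ∞) U.1 ∧ ContDiff ℝ (⊤ : ℕ∞) U.2

/-- Smoothness of a prolongation section away from the zero section. -/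
def SecSmoothOn (U : Sec A B) : Prop :=
  ContDiffOn ℝ (⊤ : ℕ∞) U.1 (Slit (A := A) (B := B)) ∧
    ContDiffOn ℝ (⊤ : ℕ∞) U.2 (Slit (A := A) (B := B))

/-- Equality of prolongation sections away from the zero section. -/
def OnSlit (U V : Sec A B) : Prop :=
  ∀ p : A × B, p.2 ≠ 0 → U.1 p = V.1 p ∧ U.2 p = V.2 p

/-- The semispray associated to the horizontal endomorphism `𝓑` (i.e. `h(S)` for
any semispray `S`). -/
def Sassoc (𝓑 : A × B → B →L[ℝ] B) : Sec A B :=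
  (fun p => p.2, fun p => 𝓑 p p.2)

/-- The Nijenhuis tensor `N_h` of the horizontal endomorphism `𝓑`. -/
def NijH (ρ : A → B →L[ℝ] A) (Lb : A → B →L[ℝ] B →L[ℝ] B)
    (𝓑 : A × B → B →L[ℝ] B) (U V : Sec A B) : Sec A B :=
  pbr ρ Lb (hor 𝓑 U) (hor 𝓑 V) - hor 𝓑 (pbr ρ Lb (hor 𝓑 U) V)
    - hor 𝓑 (pbr ρ Lb U (hor 𝓑 V)) + hor 𝓑 (pbr ρ Lb U V)

/-- The curvature `Ω = −N_h` of a horizontal endomorphism. -/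
def CurvH (ρ : A → B →L[ℝ] A) (Lb : A → B →L[ℝ] B →L[ℝ] B)
    (𝓑 : A × B → B →L[ℝ] B) (U V : Sec A B) : Sec A B :=
  - NijH ρ Lb 𝓑 U V

/-- The strong torsion `T = i_S t + H` of a horizontal endomorphism, where
`t = [J, h]^{F-N}` is the weak torsion and `H = [h, C]^{F-N}` the tension. -/
def StrongTor (ρ : A → B →L[ℝ] A) (Lb : A → B →L[ℝ] B →L[ℝ] B)
    (𝓑 : A × B → B →L[ℝ] B) (U : Sec A B) : Sec A B :=
  fnKL ρ Lb vJ (hor 𝓑) (Sassoc 𝓑) U + fnKZ ρ Lb (hor 𝓑) Liou U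

/-- The almost complex structure `F = h ∘ [S, h]^{F-N} − J` induced by a
horizontal endomorphism with associated semispray `S`. -/
def bigF (ρ : A → B →L[ℝ] A) (Lb : A → B →L[ℝ] B →L[ℝ] B)
    (𝓑 : A × B → B →L[ℝ] B) (U : Sec A B) : Sec A B :=
  hor 𝓑 (fnZK ρ Lb (Sassoc 𝓑) (hor 𝓑) U) - vJ U

/-- Homogeneity of a horizontal endomorphism: its tension `H = [h, C]^{F-N}`
vanishes. -/
def HomogeneousH (ρ : A → B →L[ℝ] A) (Lb : A → B →L[ℝ] B →L[ℝ] B)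
    (𝓑 : A × B → B →L[ℝ] B) : Prop :=
  ∀ U : Sec A B, SecSmoothOn U → OnSlit (fnKZ ρ Lb (hor 𝓑) Liou U) 0

/-- Torsion-freeness of a horizontal endomorphism: its weak torsion
`t = [J, h]^{F-N}` vanishes. -/
def TorsionFreeH (ρ : A → B →L[ℝ] A) (Lb : A → B →L[ℝ] B →L[ℝ] B)
    (𝓑 : A × B → B →L[ℝ] B) : Prop :=
  ∀ U V : Sec A B, SecSmoothOn U → SecSmoothOn V →
    OnSlit (fnKL ρ Lb vJ (hor 𝓑) U V) 0

/-- The one-form `d^L_J F = i_J d^L F` of a Finsler function. -/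
def θF (Fl : A × B → ℝ) (U : Sec A B) : A × B → ℝ :=
  fun p => fderiv ℝ Fl p ((0 : A), U.1 p)

/-- The fundamental two-form `ω = d^L d^L_J F` of a Finsler function. -/
def ωF (ρ : A → B →L[ℝ] A) (Lb : A → B →L[ℝ] B →L[ℝ] B)
    (Fl : A × B → ℝ) (U V : Sec A B) : A × B → ℝ :=
  fun p => fderiv ℝ (θF Fl V) p (ρL ρ U p) - fderiv ℝ (θF Fl U) p (ρL ρ V p)
    - θF Fl (pbr ρ Lb U V) p

/-- The axioms of a Finsler algebroid: the fundamental function is smooth away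
from the zero section, positive there, homogeneous of degree `2`
(`ρ_L(C)(F) = 2F`), and its fundamental form `ω = d^L d^L_J F` is
nondegenerate. -/
def IsFinslerData (ρ : A → B →L[ℝ] A) (Lb : A → B →L[ℝ] B →L[ℝ] B)
    (Fl : A × B → ℝ) : Prop :=
  ContDiffOn ℝ (⊤ : ℕ∞) Fl (Slit (A := A) (B := B)) ∧
    (∀ p : A × B, p.2 ≠ 0 → 0 < Fl p) ∧
    (∀ p : A × B, p.2 ≠ 0 → fderiv ℝ Fl p ((0 : A), p.2) = 2 * Fl p) ∧
    (∀ W : Sec A B, SecSmoothOn W →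
      (∀ U : Sec A B, SecSmoothOn U → ∀ p : A × B, p.2 ≠ 0 → ωF ρ Lb Fl W U p = 0) →
      ∀ p : A × B, p.2 ≠ 0 → W.1 p = 0 ∧ W.2 p = 0)

/-- Conservativity of a horizontal endomorphism: `d^L_h F = 0`. -/
def Conservative (ρ : A → B →L[ℝ] A) (Fl : A × B → ℝ)
    (𝓑 : A × B → B →L[ℝ] B) : Prop :=
  ∀ p : A × B, p.2 ≠ 0 → ∀ z : B, fderiv ℝ Fl p (ρ p.1 z, 𝓑 p z) = 0

/-- The vertical metric `G(J X̃, J Ỹ) = ω(J X̃, Ỹ)`, evaluated on two vertical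
sections. -/
def Gmet (ρ : A → B →L[ℝ] A) (Lb : A → B →L[ℝ] B →L[ℝ] B)
    (Fl : A × B → ℝ) (W₁ W₂ : Sec A B) : A × B → ℝ :=
  ωF ρ Lb Fl ((0 : (A × B) → B), W₁.2) (W₂.2, (0 : (A × B) → B))

/-- The prolongation `G̃(X̃, Ỹ) = G(J X̃, J Ỹ) + G(v X̃, v Ỹ)` of the vertical
metric along the horizontal endomorphism `𝓑`. -/
def Gtil (ρ : A → B →L[ℝ] A) (Lb : A → B →L[ℝ] B →L[ℝ] B)
    (Fl : A × B → ℝ) (𝓑 : A × B → B →L[ℝ] B) (U V : Sec A B) : A × B → ℝ :=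
  fun p => Gmet ρ Lb Fl (vJ U) (vJ V) p + Gmet ρ Lb Fl (vpr 𝓑 U) (vpr 𝓑 V) p

/-- The linear connection on `E` with Christoffel coefficient `Γ`:
`∇_X Y = ρ(X)(Y) + Γ(X, Y)`. -/
def covD (ρ : A → B →L[ℝ] A) (Γ : A → B →L[ℝ] B →L[ℝ] B) (X Y : A → B) : A → B :=
  fun x => fderiv ℝ Y x (ρ x (X x)) + Γ x (X x) (Y x)

/-- The coefficient of the horizontal endomorphism `h_∇` generated by the linear
connection `Γ` (`𝓑^β_α = −y^γ Γ^β_{αγ}`). -/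
def horOf (Γ : A → B →L[ℝ] B →L[ℝ] B) : A × B → B →L[ℝ] B :=
  fun p => -((Γ p.1).flip p.2)


lemma slit_isOpen : IsOpen (Slit (A := A) (B := B)) :=
  isOpen_compl_singleton.preimage continuous_snd

lemma strongTor_snd (ρ : A → B →L[ℝ] A) (Lb : A → B →L[ℝ] B →L[ℝ] B)
    (𝓑 : A × B → B →L[ℝ] B) {p : A × B} (hd : DifferentiableAt ℝ 𝓑 p) (c : B) :
    (StrongTor ρ Lb 𝓑 ((fun _ => c), (0 : (A × B) → B))).2 p
      = 𝓑 p c - fderiv ℝ 𝓑 p ((0 : A), c) p.2 - Lb p.1 p.2 c := by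
  have h1 : fderiv ℝ (fun q : A × B => 𝓑 q c) p = (fderiv ℝ 𝓑 p).flip c := by
    rw [fderiv_clm_apply hd (differentiableAt_const c)]
    simp
  have h2 : fderiv ℝ (fun q : A × B => 𝓑 q q.2) p
      = (𝓑 p).comp (ContinuousLinearMap.snd ℝ A B) + (fderiv ℝ 𝓑 p).flip p.2 := by
    rw [fderiv_clm_apply hd differentiableAt_snd, fderiv_snd]
  have hz : fderiv ℝ (0 : (A × B) → B) p = 0 := congrFun (fderiv_const (0 : B)) p
  simp only [StrongTor, fnKL, fnKZ, pbr, hor, vJ, Sassoc, Liou, ρL,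
    Prod.snd_add, Prod.snd_sub, Pi.add_apply, Pi.sub_apply,
    h1, h2, hz, fderiv_const, fderiv_snd, Pi.zero_apply, map_zero,
    ContinuousLinearMap.zero_apply, ContinuousLinearMap.add_apply,
    ContinuousLinearMap.coe_comp', Function.comp_apply,
    ContinuousLinearMap.flip_apply, ContinuousLinearMap.coe_snd', map_sub, map_add]
  abel

/-- If two horizontal endomorphisms on `L^π E` have the same
associated semispray and the same strong torsion `T = i_S t + H`, then they are
equal. -/
theorem horizontal_endomorphism_determined_by_semispray_and_strong_torsion
    (ρ : A → B →L[ℝ] A) (Lb : A → B →L[ℝ] B →L[ℝ] B)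
    (halg : IsLieAlgebroidData ρ Lb)
    (𝓑₁ 𝓑₂ : A × B → B →L[ℝ] B)
    (h₁s : ContDiffOn ℝ (⊤ : ℕ∞) 𝓑₁ (Slit (A := A) (B := B)))
    (h₂s : ContDiffOn ℝ (⊤ : ℕ∞) 𝓑₂ (Slit (A := A) (B := B)))
    -- same associated semisprays
    (hsemi : ∀ p : A × B, p.2 ≠ 0 → 𝓑₁ p p.2 = 𝓑₂ p p.2)
    -- same strong torsions
    (htor : ∀ U : Sec A B, SecSmoothOn U →
      OnSlit (StrongTor ρ Lb 𝓑₁ U) (StrongTor ρ Lb 𝓑₂ U)) :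
    ∀ p : A × B, p.2 ≠ 0 → 𝓑₁ p = 𝓑₂ p := by
  intro p hp
  have hnb : Slit (A := A) (B := B) ∈ nhds p := slit_isOpen.mem_nhds hp
  have hd1 : DifferentiableAt ℝ 𝓑₁ p :=
    (h₁s.differentiableOn (by simp)).differentiableAt hnb
  have hd2 : DifferentiableAt ℝ 𝓑₂ p :=
    (h₂s.differentiableOn (by simp)).differentiableAt hnb
  ext c
  have hU : SecSmoothOn (((fun _ => c), (0 : (A × B) → B)) : Sec A B) :=
    ⟨contDiffOn_const, contDiffOn_const⟩
  have ht := ((htor _ hU) p hp).2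
  rw [strongTor_snd ρ Lb 𝓑₁ hd1 c, strongTor_snd ρ Lb 𝓑₂ hd2 c] at ht
  have ht' : 𝓑₁ p c - fderiv ℝ 𝓑₁ p ((0 : A), c) p.2
      = 𝓑₂ p c - fderiv ℝ 𝓑₂ p ((0 : A), c) p.2 := sub_left_inj.mp ht
  have heq : (fun q : A × B => 𝓑₁ q q.2) =ᶠ[nhds p] (fun q : A × B => 𝓑₂ q q.2) :=
    Filter.eventuallyEq_of_mem hnb fun q hq => hsemi q hq
  have e1 : fderiv ℝ (fun q : A × B => 𝓑₁ q q.2) p ((0 : A), c)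
      = 𝓑₁ p c + fderiv ℝ 𝓑₁ p ((0 : A), c) p.2 := by
    rw [fderiv_clm_apply hd1 differentiableAt_snd, fderiv_snd]
    simp [ContinuousLinearMap.coe_snd']
  have e2 : fderiv ℝ (fun q : A × B => 𝓑₂ q q.2) p ((0 : A), c)
      = 𝓑₂ p c + fderiv ℝ 𝓑₂ p ((0 : A), c) p.2 := by
    rw [fderiv_clm_apply hd2 differentiableAt_snd, fderiv_snd]
    simp [ContinuousLinearMap.coe_snd']
  have hs' : 𝓑₁ p c + fderiv ℝ 𝓑₁ p ((0 : A), c) p.2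
      = 𝓑₂ p c + fderiv ℝ 𝓑₂ p ((0 : A), c) p.2 := by
    rw [← e1, ← e2, heq.fderiv_eq]
  have hadd : 𝓑₁ p c + 𝓑₁ p c = 𝓑₂ p c + 𝓑₂ p c := by
    calc 𝓑₁ p c + 𝓑₁ p c
        = (𝓑₁ p c - fderiv ℝ 𝓑₁ p ((0 : A), c) p.2)
          + (𝓑₁ p c + fderiv ℝ 𝓑₁ p ((0 : A), c) p.2) := by abel
      _ = (𝓑₂ p c - fderiv ℝ 𝓑₂ p ((0 : A), c) p.2)
          + (𝓑₂ p c + fderiv ℝ 𝓑₂ p ((0 : A), c) p.2) := by rw [ht', hs']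
      _ = 𝓑₂ p c + 𝓑₂ p c := by abel
  have h2 : (2 : ℝ) • (𝓑₁ p c) = (2 : ℝ) • (𝓑₂ p c) := by
    rw [two_smul, two_smul]; exact hadd
  exact smul_right_injective B two_ne_zero h2
end
end

section
/- Let h be a horizontal endomorphism on L^π E with associated semispray S. Then F := h∘[S,h]^{F−N} − J satisfies F∘F = −Id, i.e. F is an almost complex structure on L^π E. -/
/-!
We work with a Lie algebroid `π : E → M` in a (global) trivialization:
the base `M` is modelled on a real normed space `A`, the fibre of `E` is a real
normed space `B`, the total space is `E = A × B`, sections of `E` are maps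
`A → B`, the anchor is `ρ : A → (B →L[ℝ] A)` and the structure function of the
bracket is `Lb : A → (B →L[ℝ] B →L[ℝ] B)`.  The prolongation `L^π E → E` is the
trivial bundle with fibre `B × B`; its sections are pairs of maps `(A × B) → B`
(the components along the canonical frames `𝒳_α` and `𝒱_α`).
-/

noncomputable section

variable {A B : Type*} [NormedAddCommGroup A] [NormedSpace ℝ A]
  [NormedAddCommGroup B] [NormedSpace ℝ B]

/-- Closed-form computation of `F = h ∘ [S, h]^{F-N} − J`: the `fderiv` terms of
`U` cancel identically, so the formula holds everywhere. -/
lemma bigF_eval (ρ : A → B →L[ℝ] A) (Lb : A → B →L[ℝ] B →L[ℝ] B)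
    (𝓑 : A × B → B →L[ℝ] B) (U : Sec A B) :
    bigF ρ Lb 𝓑 U =
      (fun p => U.2 p - 𝓑 p (U.1 p),
       fun p => 𝓑 p (U.2 p - 𝓑 p (U.1 p)) - U.1 p) := by
  have hs : (fun p : A × B => p.2) = Prod.snd := rfl
  ext p <;>
    simp [bigF, fnZK, hor, vJ, pbr, Sassoc, ρL, Prod.sub_def, hs, fderiv_snd]

/-- For a horizontal endomorphism `h` with associated
semispray `S`, the map `F = h ∘ [S, h]^{F-N} − J` satisfies `F ∘ F = −Id`, i.e.
`F` is an almost complex structure on `L^π E`. -/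
theorem almost_complex_structure_squares_to_minus_id
    (ρ : A → B →L[ℝ] A) (Lb : A → B →L[ℝ] B →L[ℝ] B)
    (halg : IsLieAlgebroidData ρ Lb)
    (𝓑 : A × B → B →L[ℝ] B)
    (h𝓑 : ContDiffOn ℝ (⊤ : ℕ∞) 𝓑 (Slit (A := A) (B := B))) :
    ∀ U : Sec A B, SecSmoothOn U →
      OnSlit (bigF ρ Lb 𝓑 (bigF ρ Lb 𝓑 U)) (-U) := by
  intro U _ p _
  rw [bigF_eval, bigF_eval]
  constructor <;> simp [Prod.neg_mk, Prod.fst_neg, Prod.snd_neg] <;> abel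
end
end

section
/- Let h be a horizontal endomorphism on L^π E with associated semispray S and induced almost complex structure F = h[S,h]^{F−N} − J. Then: (i) F∘J = h, (ii) F∘h = −J, (iii) J∘F = v, (iv) F∘v = h∘F. -/
/-!
We work with a Lie algebroid `π : E → M` in a (global) trivialization:
the base `M` is modelled on a real normed space `A`, the fibre of `E` is a real
normed space `B`, the total space is `E = A × B`, sections of `E` are maps
`A → B`, the anchor is `ρ : A → (B →L[ℝ] A)` and the structure function of the
bracket is `Lb : A → (B →L[ℝ] B →L[ℝ] B)`.  The prolongation `L^π E → E` is the
trivial bundle with fibre `B × B`; its sections are pairs of maps `(A × B) → B`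
(the components along the canonical frames `𝒳_α` and `𝒱_α`).
-/

noncomputable section

variable {A B : Type*} [NormedAddCommGroup A] [NormedSpace ℝ A]
  [NormedAddCommGroup B] [NormedSpace ℝ B]

/-- Pointwise formula for the almost complex structure `F`. -/
lemma bigF_apply (ρ : A → B →L[ℝ] A) (Lb : A → B →L[ℝ] B →L[ℝ] B)
    (𝓑 : A × B → B →L[ℝ] B) (V : Sec A B) (p : A × B) :
    (bigF ρ Lb 𝓑 V).1 p = V.2 p - 𝓑 p (V.1 p) ∧
    (bigF ρ Lb 𝓑 V).2 p = 𝓑 p (V.2 p - 𝓑 p (V.1 p)) - V.1 p := by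
  have hs : fderiv ℝ (fun q : A × B => q.2) p = ContinuousLinearMap.snd ℝ A B := fderiv_snd
  constructor <;>
  · simp only [bigF, fnZK, pbr, hor, vJ, Sassoc, ρL, Prod.fst_sub, Prod.snd_sub,
      Pi.sub_apply, hs, ContinuousLinearMap.coe_snd']
    abel_nf
    try simp [map_sub]
    try abel

/-- For a horizontal endomorphism `h` with associated
semispray `S` and induced almost complex structure `F = h[S,h]^{F-N} − J`:
`F ∘ J = h`, `F ∘ h = −J`, `J ∘ F = v`, `F ∘ v = h ∘ F`. -/
theorem almost_complex_structure_relations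
    (ρ : A → B →L[ℝ] A) (Lb : A → B →L[ℝ] B →L[ℝ] B)
    (halg : IsLieAlgebroidData ρ Lb)
    (𝓑 : A × B → B →L[ℝ] B)
    (h𝓑 : ContDiffOn ℝ (⊤ : ℕ∞) 𝓑 (Slit (A := A) (B := B))) :
    ∀ U : Sec A B, SecSmoothOn U →
      OnSlit (bigF ρ Lb 𝓑 (vJ U)) (hor 𝓑 U) ∧
      OnSlit (bigF ρ Lb 𝓑 (hor 𝓑 U)) (-(vJ U)) ∧
      OnSlit (vJ (bigF ρ Lb 𝓑 U)) (vpr 𝓑 U) ∧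
      OnSlit (bigF ρ Lb 𝓑 (vpr 𝓑 U)) (hor 𝓑 (bigF ρ Lb 𝓑 U)) := by
  intro U _
  refine ⟨?_, ?_, ?_, ?_⟩ <;> intro p _
  · obtain ⟨h1, h2⟩ := bigF_apply ρ Lb 𝓑 (vJ U) p
    refine ⟨?_, ?_⟩
    · rw [h1]; simp [vJ, hor]
    · rw [h2]; simp [vJ, hor]
  · obtain ⟨h1, h2⟩ := bigF_apply ρ Lb 𝓑 (hor 𝓑 U) p
    refine ⟨?_, ?_⟩
    · rw [h1]; simp [hor, vJ]
    · rw [h2]; simp [hor, vJ]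
  · obtain ⟨h1', _⟩ := bigF_apply ρ Lb 𝓑 U p
    refine ⟨by simp [vJ, vpr, hor], ?_⟩
    simp only [vJ, vpr, hor, Prod.snd_sub, Pi.sub_apply]
    rw [h1']
  · obtain ⟨h1, h2⟩ := bigF_apply ρ Lb 𝓑 (vpr 𝓑 U) p
    obtain ⟨h1', h2'⟩ := bigF_apply ρ Lb 𝓑 U p
    have hv1 : (vpr 𝓑 U).1 p = 0 := by simp [vpr, hor]
    have hv2 : (vpr 𝓑 U).2 p = U.2 p - 𝓑 p (U.1 p) := by
      simp [vpr, hor]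
    refine ⟨?_, ?_⟩
    · rw [h1, hv1, hv2, map_zero, sub_zero, hor]; exact h1'.symm
    · rw [h2, hv1, hv2, map_zero, sub_zero, sub_zero]
      simp only [hor]
      rw [h1']
end
end

section
/- Let h be a horizontal endomorphism on the prolongation L^π E of a Lie algebroid and define the horizontal lift of X ∈ Γ(E) by X^h = h(X^C). Then: (i) J(X^h) = X^V, (ii) h[X^h, Y^h]_L = ([X,Y]_E)^h, and (iii) ([X,Y]_E)^V = J[X^h, Y^h]_L, for all X, Y ∈ Γ(E). -/
/-!
We work with a Lie algebroid `π : E → M` in a (global) trivialization: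
the base `M` is modelled on a real normed space `A`, the fibre of `E` is a real
normed space `B`, the total space is `E = A × B`, sections of `E` are maps
`A → B`, the anchor is `ρ : A → (B →L[ℝ] A)` and the structure function of the
bracket is `Lb : A → (B →L[ℝ] B →L[ℝ] B)`.  The prolongation `L^π E → E` is the
trivial bundle with fibre `B × B`; its sections are pairs of maps `(A × B) → B`
(the components along the canonical frames `𝒳_α` and `𝒱_α`).
-/

noncomputable section

variable {A B : Type*} [NormedAddCommGroup A] [NormedSpace ℝ A]
  [NormedAddCommGroup B] [NormedSpace ℝ B]

/-- For a horizontal endomorphism `h` on `L^π E` and the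
horizontal lift `X^h = h(X^C)`: `J(X^h) = X^V`,
`h[X^h, Y^h]_L = ([X,Y]_E)^h` and `([X,Y]_E)^V = J[X^h, Y^h]_L`. -/
theorem horizontal_lift_identities
    (ρ : A → B →L[ℝ] A) (Lb : A → B →L[ℝ] B →L[ℝ] B)
    (halg : IsLieAlgebroidData ρ Lb)
    (𝓑 : A × B → B →L[ℝ] B)
    (h𝓑 : ContDiffOn ℝ (⊤ : ℕ∞) 𝓑 (Slit (A := A) (B := B)))
    (X Y : A → B) (hX : ContDiff ℝ (⊤ : ℕ∞) X) (hY : ContDiff ℝ (⊤ : ℕ∞) Y) :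
    vJ (hlift ρ Lb 𝓑 X) = vlift X ∧
    OnSlit (hor 𝓑 (pbr ρ Lb (hlift ρ Lb 𝓑 X) (hlift ρ Lb 𝓑 Y)))
      (hlift ρ Lb 𝓑 (abr ρ Lb X Y)) ∧
    OnSlit (vlift (abr ρ Lb X Y))
      (vJ (pbr ρ Lb (hlift ρ Lb 𝓑 X) (hlift ρ Lb 𝓑 Y))) := by
  have hfst : ∀ (Z : A → B), ContDiff ℝ (⊤ : ℕ∞) Z → ∀ (p : A × B) (v : A × B),
      fderiv ℝ (fun q : A × B => Z q.1) p v = fderiv ℝ Z p.1 v.1 := by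
    intro Z hZ p v
    have h1 : HasFDerivAt (fun q : A × B => Z q.1)
        ((fderiv ℝ Z p.1).comp (ContinuousLinearMap.fst ℝ A B)) p :=
      ((hZ.differentiable (by simp) p.1).hasFDerivAt).comp p (hasFDerivAt_fst)
    rw [h1.fderiv]; rfl
  have key : ∀ p : A × B,
      (pbr ρ Lb (hlift ρ Lb 𝓑 X) (hlift ρ Lb 𝓑 Y)).1 p = abr ρ Lb X Y p.1 := by
    intro p
    simp only [pbr, hlift, hor, clift, abr, ρL]
    rw [hfst X hX, hfst Y hY]
  refine ⟨rfl, ?_, ?_⟩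
  · intro p hp
    constructor
    · exact key p
    · show 𝓑 p ((pbr ρ Lb (hlift ρ Lb 𝓑 X) (hlift ρ Lb 𝓑 Y)).1 p) = _
      rw [key p]; rfl
  · intro p hp
    exact ⟨rfl, (key p).symm⟩
end
end

section
/- Let h and h̄ be homogeneous horizontal endomorphisms on L^π E (i.e. their tensions [h,C]^{F−N} and [h̄,C]^{F−N} vanish). If [X^h, Y^V]_L = [X^{h̄}, Y^V]_L for all sections X, Y of E, then h = h̄. -/
/-!
We work with a Lie algebroid `π : E → M` in a (global) trivialization:
the base `M` is modelled on a real normed space `A`, the fibre of `E` is a real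
normed space `B`, the total space is `E = A × B`, sections of `E` are maps
`A → B`, the anchor is `ρ : A → (B →L[ℝ] A)` and the structure function of the
bracket is `Lb : A → (B →L[ℝ] B →L[ℝ] B)`.  The prolongation `L^π E → E` is the
trivial bundle with fibre `B × B`; its sections are pairs of maps `(A × B) → B`
(the components along the canonical frames `𝒳_α` and `𝒱_α`).
-/

noncomputable section

variable {A B : Type*} [NormedAddCommGroup A] [NormedSpace ℝ A]
  [NormedAddCommGroup B] [NormedSpace ℝ B]

/-- If `h` and `h̄` are homogeneous horizontal endomorphisms
on `L^π E` such that `[X^h, Y^V]_L = [X^{h̄}, Y^V]_L` for all sections `X, Y`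
of `E`, then `h = h̄`. -/
theorem homogeneous_horizontal_endomorphisms_eq
    (ρ : A → B →L[ℝ] A) (Lb : A → B →L[ℝ] B →L[ℝ] B)
    (halg : IsLieAlgebroidData ρ Lb)
    (𝓑 𝓑' : A × B → B →L[ℝ] B)
    (h𝓑 : ContDiffOn ℝ (⊤ : ℕ∞) 𝓑 (Slit (A := A) (B := B)))
    (h𝓑' : ContDiffOn ℝ (⊤ : ℕ∞) 𝓑' (Slit (A := A) (B := B)))
    (hhom : HomogeneousH ρ Lb 𝓑) (hhom' : HomogeneousH ρ Lb 𝓑')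
    (heq : ∀ X Y : A → B, ContDiff ℝ (⊤ : ℕ∞) X → ContDiff ℝ (⊤ : ℕ∞) Y →
      OnSlit (pbr ρ Lb (hlift ρ Lb 𝓑 X) (vlift Y))
        (pbr ρ Lb (hlift ρ Lb 𝓑' X) (vlift Y))) :
    ∀ p : A × B, p.2 ≠ 0 → 𝓑 p = 𝓑' p := by
  have fzero : ∀ p : A × B, fderiv ℝ (0 : A × B → B) p = 0 := fun p =>
    fderiv_const_apply (0 : B)
  have fderiv_snd' : ∀ p : A × B, fderiv ℝ (fun q : A × B => q.2) p
      = ContinuousLinearMap.snd ℝ A B := fun p => fderiv_snd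
  -- Euler relation from homogeneity
  have euler : ∀ (𝓒 : A × B → B →L[ℝ] B), HomogeneousH ρ Lb 𝓒 →
      ∀ p : A × B, p.2 ≠ 0 → ∀ v : B,
        𝓒 p v = fderiv ℝ (fun q => 𝓒 q v) p ((0 : A), p.2) := by
    intro 𝓒 hhomC p hp v
    have hU : SecSmoothOn ((fun _ => v, fun _ => 0) : Sec A B) :=
      ⟨contDiffOn_const, contDiffOn_const⟩
    have h2 := (hhomC (fun _ => v, fun _ => 0) hU p hp).2
    simp only [fnKZ, pbr, hor, Liou, ρL, vJ, Prod.snd_sub, Prod.fst_sub,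
      Pi.sub_apply, fderiv_fun_const, Pi.zero_apply, ContinuousLinearMap.zero_apply,
      map_zero, fzero, fderiv_snd', ContinuousLinearMap.coe_snd', sub_zero, zero_sub,
      Prod.snd_zero] at h2
    -- h2 : 𝓒 p v - fderiv ℝ (fun q => 𝓒 q v) p (ρ p.1 0, p.2) - 𝓒 p 0 = 0  (roughly)
    simp only [map_zero, add_zero, zero_add, sub_zero, sub_eq_zero] at h2
    exact h2
  intro p hp
  ext v
  have hX : ContDiff ℝ (⊤ : ℕ∞) (fun _ : A => v) := contDiff_const
  have hY : ContDiff ℝ (⊤ : ℕ∞) (fun _ : A => p.2) := contDiff_const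
  have h2 := (heq (fun _ => v) (fun _ => p.2) hX hY p hp).2
  simp only [pbr, hlift, hor, clift, vlift, ρL, fderiv_fun_const, Pi.zero_apply,
    ContinuousLinearMap.zero_apply, map_zero, zero_sub, neg_inj, sub_zero] at h2
  have e1 := euler 𝓑 hhom p hp v
  have e1' := euler 𝓑' hhom' p hp v
  rw [e1, e1']
  simpa using h2
end
end

section
/- Let (E, F) be a Finsler algebroid with fundamental form ω = d^L d^L_J F, vertical endomorphism J, and Liouville section C. Then: (i) i_J ω = 0, (ii) L^L_C ω = ω, and (iii) i_C ω = d^L_J F. -/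
/-!
We work with a Lie algebroid `π : E → M` in a (global) trivialization:
the base `M` is modelled on a real normed space `A`, the fibre of `E` is a real
normed space `B`, the total space is `E = A × B`, sections of `E` are maps
`A → B`, the anchor is `ρ : A → (B →L[ℝ] A)` and the structure function of the
bracket is `Lb : A → (B →L[ℝ] B →L[ℝ] B)`.  The prolongation `L^π E → E` is the
trivial bundle with fibre `B × B`; its sections are pairs of maps `(A × B) → B`
(the components along the canonical frames `𝒳_α` and `𝒱_α`).
-/

noncomputable section

variable {A B : Type*} [NormedAddCommGroup A] [NormedSpace ℝ A]
  [NormedAddCommGroup B] [NormedSpace ℝ B]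

namespace FinslerAux
open Topology Filter

variable {A B : Type*} [NormedAddCommGroup A] [NormedSpace ℝ A]
  [NormedAddCommGroup B] [NormedSpace ℝ B]

lemma isOpen_slit : IsOpen (Slit (A := A) (B := B)) := by
  show IsOpen (Prod.snd ⁻¹' {y : B | y ≠ 0})
  exact continuous_snd.isOpen_preimage _ isOpen_ne

variable {Fl : A × B → ℝ} {p : A × B}

lemma cda_DF (hFl : ContDiffAt ℝ (⊤ : ℕ∞) Fl p) :
    ContDiffAt ℝ (⊤ : ℕ∞) (fderiv ℝ Fl) p := hFl.fderiv_right (by simp)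

lemma hasFDerivAt_DF (hFl : ContDiffAt ℝ (⊤ : ℕ∞) Fl p) :
    HasFDerivAt (fderiv ℝ Fl) (fderiv ℝ (fderiv ℝ Fl) p) p :=
  ((cda_DF hFl).differentiableAt (by simp)).hasFDerivAt

lemma hasFDerivAt_H (hFl : ContDiffAt ℝ (⊤ : ℕ∞) Fl p) :
    HasFDerivAt (fderiv ℝ (fderiv ℝ Fl)) (fderiv ℝ (fderiv ℝ (fderiv ℝ Fl)) p) p :=
  (((cda_DF hFl).fderiv_right (m := (⊤:ℕ∞)) (by simp)).differentiableAt (by simp)).hasFDerivAt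

lemma symm2 (hFl : ContDiffAt ℝ (⊤ : ℕ∞) Fl p) (v w : A × B) :
    fderiv ℝ (fderiv ℝ Fl) p v w = fderiv ℝ (fderiv ℝ Fl) p w v :=
  hFl.isSymmSndFDerivAt (by simp; exact WithTop.coe_le_coe.2 (le_top : (2 : ℕ∞) ≤ ⊤)) v w

lemma symm3 (hFl : ContDiffAt ℝ (⊤ : ℕ∞) Fl p) (v w : A × B) :
    fderiv ℝ (fderiv ℝ (fderiv ℝ Fl)) p v w = fderiv ℝ (fderiv ℝ (fderiv ℝ Fl)) p w v :=
  (cda_DF hFl).isSymmSndFDerivAt (by simp; exact WithTop.coe_le_coe.2 (le_top : (2 : ℕ∞) ≤ ⊤)) v w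

/-- derivative of `q ↦ DFl q (0, f q)`. -/
lemma theta_hasFDerivAt {f : A × B → B} (hFl : ContDiffAt ℝ (⊤ : ℕ∞) Fl p)
    (hf : DifferentiableAt ℝ f p) :
    HasFDerivAt (fun q => fderiv ℝ Fl q ((0 : A), f q))
      (((fderiv ℝ Fl p).comp (((0 : (A × B) →L[ℝ] A)).prod (fderiv ℝ f p))) +
        (fderiv ℝ (fderiv ℝ Fl) p).flip ((0 : A), f p)) p := by
  have hu : HasFDerivAt (fun q => ((0 : A), f q))
      (((0 : (A × B) →L[ℝ] A)).prod (fderiv ℝ f p)) p :=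
    HasFDerivAt.prodMk (hasFDerivAt_const _ _) hf.hasFDerivAt
  exact (hasFDerivAt_DF hFl).clm_apply hu

/-- The pointwise formula for the fundamental form. -/
lemma omega_pt (ρ : A → B →L[ℝ] A) (Lb : A → B →L[ℝ] B →L[ℝ] B)
    {U V : Sec A B} (hFl : ContDiffAt ℝ (⊤ : ℕ∞) Fl p)
    (hU1 : DifferentiableAt ℝ U.1 p) (hV1 : DifferentiableAt ℝ V.1 p) :
    ωF ρ Lb Fl U V p =
      fderiv ℝ (fderiv ℝ Fl) p (ρL ρ U p) ((0 : A), V.1 p)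
      - fderiv ℝ (fderiv ℝ Fl) p (ρL ρ V p) ((0 : A), U.1 p)
      - fderiv ℝ Fl p ((0 : A), Lb p.1 (U.1 p) (V.1 p)) := by
  have e1 := (theta_hasFDerivAt hFl hV1).fderiv
  have e2 := (theta_hasFDerivAt hFl hU1).fderiv
  have hsplit : ((0 : A), fderiv ℝ V.1 p (ρL ρ U p) - fderiv ℝ U.1 p (ρL ρ V p)
      + Lb p.1 (U.1 p) (V.1 p))
      = ((0 : A), fderiv ℝ V.1 p (ρL ρ U p)) - ((0 : A), fderiv ℝ U.1 p (ρL ρ V p))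
        + ((0 : A), Lb p.1 (U.1 p) (V.1 p)) := by
    simp [Prod.ext_iff]
  have hθ : ∀ W : Sec A B, θF Fl W = fun q => fderiv ℝ Fl q ((0 : A), W.1 q) := fun _ => rfl
  simp only [ωF, hθ, pbr]
  rw [e1, e2]
  simp only [ContinuousLinearMap.add_apply, ContinuousLinearMap.coe_comp',
    Function.comp_apply, ContinuousLinearMap.prod_apply, ContinuousLinearMap.zero_apply,
    ContinuousLinearMap.flip_apply, hsplit, map_add, map_sub]
  ring

lemma euler1 (hFlOn : ContDiffOn ℝ (⊤ : ℕ∞) Fl (Slit (A := A) (B := B)))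
    (hhom : ∀ q : A × B, q.2 ≠ 0 → fderiv ℝ Fl q ((0 : A), q.2) = 2 * Fl q)
    (hp : p.2 ≠ 0) (b : B) :
    fderiv ℝ (fderiv ℝ Fl) p ((0 : A), p.2) ((0 : A), b) = fderiv ℝ Fl p ((0 : A), b) := by
  have hmem : Slit (A := A) (B := B) ∈ 𝓝 p := isOpen_slit.mem_nhds hp
  have hFl : ContDiffAt ℝ (⊤ : ℕ∞) Fl p := hFlOn.contDiffAt hmem
  have hℓ : HasFDerivAt (fun q : A × B => ((0 : A), q.2))
      (((0 : (A × B) →L[ℝ] A)).prod (ContinuousLinearMap.snd ℝ A B)) p :=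
    HasFDerivAt.prodMk (hasFDerivAt_const _ _) hasFDerivAt_snd
  have h1 : HasFDerivAt (fun q : A × B => fderiv ℝ Fl q ((0 : A), q.2) - 2 * Fl q)
      ((((fderiv ℝ Fl p).comp (((0 : (A × B) →L[ℝ] A)).prod (ContinuousLinearMap.snd ℝ A B))) +
        (fderiv ℝ (fderiv ℝ Fl) p).flip ((0 : A), p.2))
        - (2 : ℝ) • fderiv ℝ Fl p) p :=
    ((hasFDerivAt_DF hFl).clm_apply hℓ).sub
      (((hFl.differentiableAt (by simp)).hasFDerivAt).const_mul (2 : ℝ))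
  have hz : fderiv ℝ (fun q : A × B => fderiv ℝ Fl q ((0 : A), q.2) - 2 * Fl q) p = 0 := by
    have hev : (fun q : A × B => fderiv ℝ Fl q ((0 : A), q.2) - 2 * Fl q)
        =ᶠ[𝓝 p] (fun _ => (0 : ℝ)) :=
      Filter.eventuallyEq_of_mem hmem (fun q hq => by simp [hhom q hq])
    rw [hev.fderiv_eq]; exact fderiv_const_apply 0
  have h2 := h1.fderiv
  rw [hz] at h2
  have h0 := ContinuousLinearMap.ext_iff.1 h2.symm ((0 : A), b)
  simp only [ContinuousLinearMap.sub_apply, ContinuousLinearMap.add_apply,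
    ContinuousLinearMap.coe_comp', Function.comp_apply, ContinuousLinearMap.prod_apply,
    ContinuousLinearMap.zero_apply, ContinuousLinearMap.coe_snd',
    ContinuousLinearMap.flip_apply, ContinuousLinearMap.smul_apply, smul_eq_mul,
    ContinuousLinearMap.zero_apply] at h0
  have hsy := symm2 hFl ((0 : A), p.2) ((0 : A), b)
  rw [hsy]
  linarith

lemma euler2 (hFlOn : ContDiffOn ℝ (⊤ : ℕ∞) Fl (Slit (A := A) (B := B)))
    (hhom : ∀ q : A × B, q.2 ≠ 0 → fderiv ℝ Fl q ((0 : A), q.2) = 2 * Fl q)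
    (hp : p.2 ≠ 0) (w : A × B) (b : B) :
    fderiv ℝ (fderiv ℝ (fderiv ℝ Fl)) p ((0 : A), p.2) w ((0 : A), b)
      = fderiv ℝ (fderiv ℝ Fl) p w ((0 : A), b)
        - fderiv ℝ (fderiv ℝ Fl) p ((0 : A), w.2) ((0 : A), b) := by
  have hmem : Slit (A := A) (B := B) ∈ 𝓝 p := isOpen_slit.mem_nhds hp
  have hFl : ContDiffAt ℝ (⊤ : ℕ∞) Fl p := hFlOn.contDiffAt hmem
  have hℓ : HasFDerivAt (fun q : A × B => ((0 : A), q.2))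
      (((0 : (A × B) →L[ℝ] A)).prod (ContinuousLinearMap.snd ℝ A B)) p :=
    HasFDerivAt.prodMk (hasFDerivAt_const _ _) hasFDerivAt_snd
  have h1 := (((hasFDerivAt_H hFl).clm_apply hℓ).clm_apply
      (hasFDerivAt_const ((0 : A), b) p)).fun_sub
    ((hasFDerivAt_DF hFl).clm_apply (hasFDerivAt_const ((0 : A), b) p))
  have hz : fderiv ℝ (fun q : A × B =>
      fderiv ℝ (fderiv ℝ Fl) q ((0 : A), q.2) ((0 : A), b) - fderiv ℝ Fl q ((0 : A), b)) p
      = 0 := by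
    have hev : (fun q : A × B =>
        fderiv ℝ (fderiv ℝ Fl) q ((0 : A), q.2) ((0 : A), b) - fderiv ℝ Fl q ((0 : A), b))
        =ᶠ[𝓝 p] (fun _ => (0 : ℝ)) :=
      Filter.eventuallyEq_of_mem hmem (fun q hq => by
        simp [euler1 hFlOn hhom hq b])
    rw [hev.fderiv_eq]; exact fderiv_const_apply 0
  have h2 := h1.fderiv
  rw [hz] at h2
  have h0 := ContinuousLinearMap.ext_iff.1 h2.symm w
  simp only [ContinuousLinearMap.sub_apply, ContinuousLinearMap.add_apply,
    ContinuousLinearMap.coe_comp', Function.comp_apply, ContinuousLinearMap.prod_apply,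
    ContinuousLinearMap.zero_apply, ContinuousLinearMap.coe_snd',
    ContinuousLinearMap.flip_apply, ContinuousLinearMap.zero_apply, map_zero] at h0
  rw [symm3 hFl ((0 : A), p.2) w]
  linarith


end FinslerAux

open Topology in
/-- On a Finsler algebroid `(E, F)` with fundamental form
`ω = d^L d^L_J F`: `i_J ω = 0`, `L^L_C ω = ω` and `i_C ω = d^L_J F`. -/
theorem fundamental_form_identities
    (ρ : A → B →L[ℝ] A) (Lb : A → B →L[ℝ] B →L[ℝ] B)
    (halg : IsLieAlgebroidData ρ Lb)
    (Fl : A × B → ℝ) (hF : IsFinslerData ρ Lb Fl) :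
    (∀ U V : Sec A B, SecSmoothOn U → SecSmoothOn V → ∀ p : A × B, p.2 ≠ 0 →
      ωF ρ Lb Fl (vJ U) V p + ωF ρ Lb Fl U (vJ V) p = 0) ∧
    (∀ U V : Sec A B, SecSmoothOn U → SecSmoothOn V → ∀ p : A × B, p.2 ≠ 0 →
      fderiv ℝ (ωF ρ Lb Fl U V) p (ρL ρ Liou p)
        - ωF ρ Lb Fl (pbr ρ Lb Liou U) V p - ωF ρ Lb Fl U (pbr ρ Lb Liou V) p
        = ωF ρ Lb Fl U V p) ∧
    (∀ U : Sec A B, SecSmoothOn U → ∀ p : A × B, p.2 ≠ 0 →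
      ωF ρ Lb Fl Liou U p = θF Fl U p) := by
  obtain ⟨hFlOn, hpos, hhom, hnd⟩ := hF
  refine ⟨?_, ?_, ?_⟩
  · -- (i)  i_J ω = 0
    intro U V hU hV p hp
    have hmem : Slit (A := A) (B := B) ∈ 𝓝 p := FinslerAux.isOpen_slit.mem_nhds hp
    have hFl : ContDiffAt ℝ (⊤ : ℕ∞) Fl p := hFlOn.contDiffAt hmem
    have hU1 : DifferentiableAt ℝ U.1 p :=
      (hU.1.contDiffAt hmem).differentiableAt (by simp)
    have hV1 : DifferentiableAt ℝ V.1 p :=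
      (hV.1.contDiffAt hmem).differentiableAt (by simp)
    have hzU : DifferentiableAt ℝ ((vJ U).1) p := differentiableAt_const (0 : B)
    have hzV : DifferentiableAt ℝ ((vJ V).1) p := differentiableAt_const (0 : B)
    rw [FinslerAux.omega_pt ρ Lb hFl hzU hV1, FinslerAux.omega_pt ρ Lb hFl hU1 hzV]
    have hs := FinslerAux.symm2 hFl ((0 : A), U.1 p) ((0 : A), V.1 p)
    simp only [vJ, ρL, Pi.zero_apply, map_zero, ContinuousLinearMap.zero_apply]
    simp only [show ((0 : A), (0 : B)) = (0 : A × B) from rfl, map_zero,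
      ContinuousLinearMap.zero_apply]
    linarith
  · -- (ii)  L_C ω = ω
    intro U V hU hV p hp
    have hmem : Slit (A := A) (B := B) ∈ 𝓝 p := FinslerAux.isOpen_slit.mem_nhds hp
    have hFl : ContDiffAt ℝ (⊤ : ℕ∞) Fl p := hFlOn.contDiffAt hmem
    have hU1C : ContDiffAt ℝ (⊤ : ℕ∞) U.1 p := hU.1.contDiffAt hmem
    have hV1C : ContDiffAt ℝ (⊤ : ℕ∞) V.1 p := hV.1.contDiffAt hmem
    have hU1 : DifferentiableAt ℝ U.1 p := hU1C.differentiableAt (by simp)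
    have hV1 : DifferentiableAt ℝ V.1 p := hV1C.differentiableAt (by simp)
    have hU2 : DifferentiableAt ℝ U.2 p := (hU.2.contDiffAt hmem).differentiableAt (by simp)
    have hV2 : DifferentiableAt ℝ V.2 p := (hV.2.contDiffAt hmem).differentiableAt (by simp)
    -- derivative of the anchor and bracket coefficient along the base point
    have hρ : HasFDerivAt (fun q : A × B => ρ q.1)
        ((fderiv ℝ ρ p.1).comp (ContinuousLinearMap.fst ℝ A B)) p :=
      ((halg.1.contDiffAt.differentiableAt (by simp)).hasFDerivAt).comp p hasFDerivAt_fst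
    have hLbρ : HasFDerivAt (fun q : A × B => Lb q.1)
        ((fderiv ℝ Lb p.1).comp (ContinuousLinearMap.fst ℝ A B)) p :=
      ((halg.2.1.contDiffAt.differentiableAt (by simp)).hasFDerivAt).comp p hasFDerivAt_fst
    have haU := HasFDerivAt.prodMk (hρ.clm_apply hU1.hasFDerivAt) hU2.hasFDerivAt
    have haV := HasFDerivAt.prodMk (hρ.clm_apply hV1.hasFDerivAt) hV2.hasFDerivAt
    have hbU : HasFDerivAt (fun q : A × B => ((0 : A), U.1 q))
        (((0 : (A × B) →L[ℝ] A)).prod (fderiv ℝ U.1 p)) p :=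
      HasFDerivAt.prodMk (hasFDerivAt_const _ _) hU1.hasFDerivAt
    have hbV : HasFDerivAt (fun q : A × B => ((0 : A), V.1 q))
        (((0 : (A × B) →L[ℝ] A)).prod (fderiv ℝ V.1 p)) p :=
      HasFDerivAt.prodMk (hasFDerivAt_const _ _) hV1.hasFDerivAt
    have hT1 := ((FinslerAux.hasFDerivAt_H hFl).clm_apply haU).clm_apply hbV
    have hT2 := ((FinslerAux.hasFDerivAt_H hFl).clm_apply haV).clm_apply hbU
    have hLbuv := (hLbρ.clm_apply hU1.hasFDerivAt).clm_apply hV1.hasFDerivAt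
    have hT3 := (FinslerAux.hasFDerivAt_DF hFl).clm_apply
      (HasFDerivAt.prodMk (hasFDerivAt_const ((0 : A)) p) hLbuv)
    have hΦ := (hT1.fun_sub hT2).fun_sub hT3
    -- the fundamental form agrees with its pointwise formula near `p`
    have hev : ωF ρ Lb Fl U V =ᶠ[𝓝 p] (fun q =>
        fderiv ℝ (fderiv ℝ Fl) q (ρ q.1 (U.1 q), U.2 q) ((0 : A), V.1 q)
        - fderiv ℝ (fderiv ℝ Fl) q (ρ q.1 (V.1 q), V.2 q) ((0 : A), U.1 q)
        - fderiv ℝ Fl q ((0 : A), Lb q.1 (U.1 q) (V.1 q))) := by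
      refine Filter.eventuallyEq_of_mem hmem (fun q hq => ?_)
      have hmq : Slit (A := A) (B := B) ∈ 𝓝 q := FinslerAux.isOpen_slit.mem_nhds hq
      exact FinslerAux.omega_pt ρ Lb (hFlOn.contDiffAt hmq)
        ((hU.1.contDiffAt hmq).differentiableAt (by simp))
        ((hV.1.contDiffAt hmq).differentiableAt (by simp))
    have e3 : fderiv ℝ (ωF ρ Lb Fl U V) p =
        ((fderiv ℝ (fun q : A × B =>
            fderiv ℝ (fderiv ℝ Fl) q (ρ q.1 (U.1 q), U.2 q) ((0 : A), V.1 q)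
            - fderiv ℝ (fderiv ℝ Fl) q (ρ q.1 (V.1 q), V.2 q) ((0 : A), U.1 q)
            - fderiv ℝ Fl q ((0 : A), Lb q.1 (U.1 q) (V.1 q))) p)) := hev.fderiv_eq
    rw [e3, hΦ.fderiv]
    -- the brackets with the Liouville section
    have hpbrU1 : (pbr ρ Lb Liou U).1 = fun q => fderiv ℝ U.1 q ((0 : A), q.2) := by
      funext q
      simp [pbr, ρL, Liou, show (0 : (A × B) → B) = (fun _ => (0 : B)) from rfl,
        fderiv_fun_const]
    have hpbrV1 : (pbr ρ Lb Liou V).1 = fun q => fderiv ℝ V.1 q ((0 : A), q.2) := by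
      funext q
      simp [pbr, ρL, Liou, show (0 : (A × B) → B) = (fun _ => (0 : B)) from rfl,
        fderiv_fun_const]
    have hdU1diff : DifferentiableAt ℝ ((pbr ρ Lb Liou U).1) p := by
      rw [hpbrU1]
      exact ((hU1C.fderiv_right (m := (⊤ : ℕ∞)) (by simp)).differentiableAt
        (by simp)).clm_apply (DifferentiableAt.prodMk (differentiableAt_const _) differentiableAt_snd)
    have hdV1diff : DifferentiableAt ℝ ((pbr ρ Lb Liou V).1) p := by
      rw [hpbrV1]
      exact ((hV1C.fderiv_right (m := (⊤ : ℕ∞)) (by simp)).differentiableAt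
        (by simp)).clm_apply (DifferentiableAt.prodMk (differentiableAt_const _) differentiableAt_snd)
    rw [FinslerAux.omega_pt ρ Lb hFl hdU1diff hV1,
      FinslerAux.omega_pt ρ Lb hFl hU1 hdV1diff,
      FinslerAux.omega_pt ρ Lb hFl hU1 hV1]
    have hc : ρL ρ Liou p = ((0 : A), p.2) := by
      simp [ρL, Liou, show (0 : (A × B) → B) = (fun _ => (0 : B)) from rfl]
    have hU1p := congrFun hpbrU1 p
    have hV1p := congrFun hpbrV1 p
    have hU2p : (pbr ρ Lb Liou U).2 p = fderiv ℝ U.2 p ((0 : A), p.2) - U.2 p := by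
      simp [pbr, ρL, Liou, show (0 : (A × B) → B) = (fun _ => (0 : B)) from rfl,
        show (fun r : A × B => r.2) = (Prod.snd : A × B → B) from rfl, fderiv_snd]
    have hV2p : (pbr ρ Lb Liou V).2 p = fderiv ℝ V.2 p ((0 : A), p.2) - V.2 p := by
      simp [pbr, ρL, Liou, show (0 : (A × B) → B) = (fun _ => (0 : B)) from rfl,
        show (fun r : A × B => r.2) = (Prod.snd : A × B → B) from rfl, fderiv_snd]
    have hsp : ∀ (x : A) (y z : B), ((x, y - z) : A × B) = (x, y) - ((0 : A), z) := by
      intro x y z; simp [Prod.ext_iff]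
    have hsa : ∀ (y z : B), (((0 : A), y + z) : A × B) = ((0 : A), y) + ((0 : A), z) := by
      intro y z; simp [Prod.ext_iff]
    simp only [hc]
    simp only [ρL]
    simp only [hU1p, hV1p, hU2p, hV2p]
    simp only [Liou, ContinuousLinearMap.add_apply,
      ContinuousLinearMap.sub_apply, ContinuousLinearMap.coe_comp', Function.comp_apply,
      ContinuousLinearMap.prod_apply, ContinuousLinearMap.zero_apply,
      ContinuousLinearMap.flip_apply, ContinuousLinearMap.coe_fst', ContinuousLinearMap.coe_snd',
      map_zero, Pi.zero_apply, add_zero, zero_add]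
    rw [FinslerAux.euler2 hFlOn hhom hp (ρ p.1 (U.1 p), U.2 p) (V.1 p),
      FinslerAux.euler2 hFlOn hhom hp (ρ p.1 (V.1 p), V.2 p) (U.1 p),
      FinslerAux.euler1 hFlOn hhom hp ((Lb p.1 (U.1 p)) (V.1 p))]
    simp only [hsp, hsa, map_sub, map_add, ContinuousLinearMap.sub_apply,
      ContinuousLinearMap.add_apply]
    ring


  · -- (iii)  i_C ω = θ
    intro U hU p hp
    have hmem : Slit (A := A) (B := B) ∈ 𝓝 p := FinslerAux.isOpen_slit.mem_nhds hp
    have hFl : ContDiffAt ℝ (⊤ : ℕ∞) Fl p := hFlOn.contDiffAt hmem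
    have hU1 : DifferentiableAt ℝ U.1 p :=
      (hU.1.contDiffAt hmem).differentiableAt (by simp)
    have hzC : DifferentiableAt ℝ ((Liou : Sec A B).1) p := differentiableAt_const (0 : B)
    rw [FinslerAux.omega_pt ρ Lb hFl hzC hU1]
    have he := FinslerAux.euler1 hFlOn hhom hp (U.1 p)
    simp only [Liou, ρL, Pi.zero_apply, map_zero, ContinuousLinearMap.zero_apply]
    simp only [show ((0 : A), (0 : B)) = (0 : A × B) from rfl, map_zero,
      ContinuousLinearMap.zero_apply]
    rw [he]
    simp [θF]
end
end
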